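/- Let F be a cumulative distribution function on ℝ supported on [a,b], a < b, a,b ∈ ℝ, with mean μ. Then for every convex function g : ℝ → ℝ and every n ∈ ℕ, g(nμ) ≤ inf_{S∈𝔖_n} E[g(S)] ≤ (1/2)·g(nμ + (b−a)) + (1/2)·g(nμ − (b−a)). -/

import Mathlib

open MeasureTheory ProbabilityTheory Set Filter Topology

section Quantile

variable (ν : Measure ℝ) (a b : ℝ)

noncomputable def rquant : ℝ → ℝ :=
  fun u => sInf ({x | u ≤ cdf ν x} ∩ Icc a b ∪ {b})

variable {ν a b}

lemma rquant_set_nonempty (u : ℝ) : ({x | u ≤ cdf ν x} ∩ Icc a b ∪ {b}).Nonempty :=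
  ⟨b, Or.inr rfl⟩

lemma rquant_set_bddBelow (hab : a ≤ b) (u : ℝ) :
    BddBelow ({x | u ≤ cdf ν x} ∩ Icc a b ∪ {b}) := by
  refine ⟨a, ?_⟩
  rintro x (⟨-, hx, -⟩ | rfl)
  · exact hx
  · exact hab

lemma rquant_mem (hab : a ≤ b) (u : ℝ) : rquant ν a b u ∈ Icc a b := by
  constructor
  · refine le_csInf (rquant_set_nonempty u) ?_
    rintro x (⟨-, hx, -⟩ | rfl)
    · exact hx
    · exact hab
  · exact csInf_le (rquant_set_bddBelow hab u) (Or.inr rfl)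

lemma rquant_mono (hab : a ≤ b) : Monotone (rquant ν a b) := by
  intro u v huv
  apply csInf_le_csInf (rquant_set_bddBelow hab u) (rquant_set_nonempty v)
  rintro x (⟨hx1, hx2⟩ | rfl)
  · exact Or.inl ⟨le_trans huv hx1, hx2⟩
  · exact Or.inr rfl

lemma cdf_eq_zero_of_lt [IsProbabilityMeasure ν] (hsupp : ν (Icc a b)ᶜ = 0)
    {x : ℝ} (hx : x < a) : cdf ν x = 0 := by
  have h0 : ν (Iic x) = 0 := by
    refine measure_mono_null (fun y hy => ?_) hsupp
    simp only [mem_compl_iff, mem_Icc, mem_Iic] at *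
    intro h
    linarith [h.1]
  have := ofReal_cdf ν x
  rw [h0] at this
  have h1 := cdf_nonneg ν x
  have := ENNReal.ofReal_eq_zero.mp this
  linarith

lemma cdf_b_eq_one [IsProbabilityMeasure ν] (hsupp : ν (Icc a b)ᶜ = 0) : cdf ν b = 1 := by
  have h0 : ν (Iic b)ᶜ = 0 := by
    refine measure_mono_null (fun y hy => ?_) hsupp
    simp only [mem_compl_iff, mem_Icc, mem_Iic, not_le, not_and, not_forall] at *
    intro h
    linarith
  have h1 : ν (Iic b) = 1 := by
    rwa [prob_compl_eq_zero_iff measurableSet_Iic] at h0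
  have := ofReal_cdf ν b
  rw [h1] at this
  exact ENNReal.ofReal_eq_one.mp this

lemma rquant_le_iff [IsProbabilityMeasure ν] (hab : a ≤ b) (hsupp : ν (Icc a b)ᶜ = 0)
    {u : ℝ} (hu : u ∈ Ioc (0:ℝ) 1) (x : ℝ) : rquant ν a b u ≤ x ↔ u ≤ cdf ν x := by
  constructor
  · intro h
    have key : ∀ y, rquant ν a b u < y → u ≤ cdf ν y := by
      intro y hy
      obtain ⟨z, hz, hzy⟩ := exists_lt_of_csInf_lt (rquant_set_nonempty u) hy
      rcases hz with ⟨hz1, _⟩ | rfl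
      · exact le_trans hz1 ((cdf ν).mono hzy.le)
      · calc u ≤ 1 := hu.2
          _ = cdf ν z := (cdf_b_eq_one hsupp).symm
          _ ≤ cdf ν y := (cdf ν).mono hzy.le
    have hrc : Tendsto (cdf ν) (𝓝[>] (rquant ν a b u)) (𝓝 (cdf ν (rquant ν a b u))) :=
      ((cdf ν).right_continuous _).tendsto.mono_left
        (nhdsWithin_mono _ Ioi_subset_Ici_self)
    have h2 : u ≤ cdf ν (rquant ν a b u) :=
      ge_of_tendsto hrc (eventually_nhdsWithin_of_forall (fun y hy => key y hy))
    exact le_trans h2 ((cdf ν).mono h)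
  · intro h
    rcases le_or_gt b x with hbx | hxb
    · exact le_trans (rquant_mem hab u).2 hbx
    rcases lt_or_ge x a with hxa | hax
    · exfalso
      have := cdf_eq_zero_of_lt hsupp hxa
      rw [this] at h
      linarith [hu.1]
    · exact csInf_le (rquant_set_bddBelow hab u) (Or.inl ⟨h, hax, hxb.le⟩)

lemma rquant_map [IsProbabilityMeasure ν] (hab : a ≤ b) (hsupp : ν (Icc a b)ᶜ = 0) :
    Measure.map (rquant ν a b) (volume.restrict (Ioc 0 1)) = ν := by
  have hqm : Measurable (rquant ν a b) := (rquant_mono hab).measurable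
  haveI : IsProbabilityMeasure (volume.restrict (Ioc (0:ℝ) 1)) :=
    ⟨by simp [Measure.restrict_apply_univ]⟩
  haveI : IsProbabilityMeasure (Measure.map (rquant ν a b) (volume.restrict (Ioc 0 1))) :=
    Measure.isProbabilityMeasure_map hqm.aemeasurable
  refine Measure.ext_of_Iic _ _ (fun x => ?_)
  rw [Measure.map_apply hqm measurableSet_Iic, Measure.restrict_apply (hqm measurableSet_Iic)]
  have hset : rquant ν a b ⁻¹' Iic x ∩ Ioc 0 1 = Ioc 0 (cdf ν x) := by
    ext u
    simp only [mem_inter_iff, mem_preimage, mem_Iic, mem_Ioc]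
    constructor
    · rintro ⟨h1, h2, h3⟩
      exact ⟨h2, (rquant_le_iff hab hsupp ⟨h2, h3⟩ x).mp h1⟩
    · rintro ⟨h1, h2⟩
      have h3 : u ≤ 1 := le_trans h2 (cdf_le_one ν x)
      exact ⟨(rquant_le_iff hab hsupp ⟨h1, h3⟩ x).mpr h2, h1, h3⟩
  rw [hset, Real.volume_Ioc, sub_zero, ofReal_cdf]

end Quantile

section Coupling

variable {ν : Measure ℝ} [IsProbabilityMeasure ν] {a b : ℝ}

set_option maxHeartbeats 2000000 in
lemma coupling_exists (hab : a < b) (hsupp : ν (Icc a b)ᶜ = 0) (n : ℕ) (hn : 0 < n) :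
    ∃ X : Fin n → AddCircle (1:ℝ) → ℝ,
      (∀ i, Measurable (X i)) ∧
      (∀ i, Measure.map (X i) (volume : Measure (AddCircle (1:ℝ))) = ν) ∧
      (∀ i ω, X i ω ∈ Icc a b) ∧
      (∀ ω ω', (∑ i, X i ω) ≤ (∑ i, X i ω') + (b - a)) := by
  haveI : NeZero n := ⟨hn.ne'⟩
  set q : ℝ → ℝ := rquant ν a b with hq
  have hq_meas : Measurable q := (rquant_mono hab.le).measurable
  have hq_mem : ∀ u, q u ∈ Icc a b := rquant_mem hab.le
  have hq_mono : Monotone q := rquant_mono hab.le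
  -- the representative map
  set rep : AddCircle (1:ℝ) → ℝ := fun ω => ((AddCircle.equivIco 1 0 ω : Ico (0:ℝ) (0+1)) : ℝ)
    with hrep
  have hrep_mem : ∀ ω, rep ω ∈ Ico (0:ℝ) 1 := by
    intro ω
    have := (AddCircle.equivIco 1 0 ω).2
    simpa using this
  have hrep_of_mem : ∀ u : ℝ, u ∈ Ico (0:ℝ) 1 → rep ((u : ℝ) : AddCircle (1:ℝ)) = u := by
    intro u hu
    show ((AddCircle.equivIco 1 0 ((u : ℝ) : AddCircle (1:ℝ)) : Ico (0:ℝ) (0+1)) : ℝ) = u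
    rw [AddCircle.equivIco, QuotientAddGroup.equivIcoMod_coe]
    exact (toIcoMod_eq_self _).mpr (by simpa using hu)
  have hrep_mk : ∀ ω : AddCircle (1:ℝ), ((rep ω : ℝ) : AddCircle (1:ℝ)) = ω := by
    intro ω
    show ((AddCircle.equivIco 1 0).symm (AddCircle.equivIco 1 0 ω) : AddCircle (1:ℝ)) = ω
    exact (AddCircle.equivIco 1 0).symm_apply_apply ω
  have hrep_meas : Measurable rep :=
    measurable_subtype_coe.comp (AddCircle.measurableEquivIco 1 0).measurable
  -- the random variables
  set X : Fin n → AddCircle (1:ℝ) → ℝ :=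
    fun i ω => q (rep (ω + (((i : ℕ) : ℝ) / (n:ℝ) : ℝ))) with hX
  have hXmeas : ∀ i, Measurable (X i) :=
    fun i => (hq_meas.comp hrep_meas).comp (measurable_add_const _)
  -- laws
  have hmk : Measure.map (fun u : ℝ => (u : AddCircle (1:ℝ))) (volume.restrict (Ioc 0 1))
      = (volume : Measure (AddCircle (1:ℝ))) := by
    have := (AddCircle.measurePreserving_mk (1:ℝ) 0).map_eq
    simpa using this
  have hIcoIoc : (volume.restrict (Ioc (0:ℝ) 1)) = (volume.restrict (Ico (0:ℝ) 1)) := by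
    refine Measure.restrict_congr_set ?_
    exact Ioc_ae_eq_Icc.trans Ico_ae_eq_Icc.symm
  have hrepmap : Measure.map rep (volume : Measure (AddCircle (1:ℝ)))
      = volume.restrict (Ioc 0 1) := by
    rw [← hmk, Measure.map_map hrep_meas AddCircle.measurable_mk']
    have hcongr : (fun u : ℝ => rep ((u : ℝ) : AddCircle (1:ℝ)))
        =ᵐ[volume.restrict (Ioc (0:ℝ) 1)] id := by
      rw [hIcoIoc]
      filter_upwards [ae_restrict_mem measurableSet_Ico] with u hu
      exact hrep_of_mem u hu
    calc Measure.map (rep ∘ fun u : ℝ => ((u:ℝ) : AddCircle (1:ℝ))) (volume.restrict (Ioc 0 1))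
        = Measure.map id (volume.restrict (Ioc (0:ℝ) 1)) := Measure.map_congr hcongr
      _ = volume.restrict (Ioc (0:ℝ) 1) := Measure.map_id
  have hXlaw : ∀ i, Measure.map (X i) (volume : Measure (AddCircle (1:ℝ))) = ν := by
    intro i
    have h1 : Measure.map (fun ω : AddCircle (1:ℝ) => ω + (((i : ℕ) : ℝ) / (n:ℝ) : ℝ))
        (volume : Measure (AddCircle (1:ℝ))) = volume := map_add_right_eq_self _ _
    calc Measure.map (X i) volume
        = Measure.map (q ∘ rep) (Measure.map
            (fun ω : AddCircle (1:ℝ) => ω + (((i : ℕ) : ℝ) / (n:ℝ) : ℝ)) volume) := by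
          rw [Measure.map_map (hq_meas.comp hrep_meas) (measurable_add_const _)]
          rfl
      _ = Measure.map (q ∘ rep) volume := by rw [h1]
      _ = Measure.map q (Measure.map rep volume) := by
          rw [Measure.map_map hq_meas hrep_meas]
      _ = Measure.map q (volume.restrict (Ioc 0 1)) := by rw [hrepmap]
      _ = ν := rquant_map hab.le hsupp
  refine ⟨X, hXmeas, hXlaw, fun i ω => hq_mem _, ?_⟩
  -- the key bound
  have hn' : (0:ℝ) < n := by exact_mod_cast hn
  -- representation of the sum
  have hrepS : ∀ ω : AddCircle (1:ℝ), ∃ t ∈ Ico (0:ℝ) (1/n),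
      (∑ i, X i ω) = ∑ j : Fin n, q (t + ((j : ℕ) : ℝ) / n) := by
    intro ω
    set u : ℝ := rep ω with hu
    have hu_mem : u ∈ Ico (0:ℝ) 1 := hrep_mem ω
    set k : ℕ := ⌊(n:ℝ) * u⌋₊ with hk
    have hk_lt : k < n := by
      rw [hk]
      rw [Nat.floor_lt (mul_nonneg hn'.le hu_mem.1)]
      calc (n:ℝ) * u < n * 1 := by
            exact mul_lt_mul_of_pos_left hu_mem.2 hn'
        _ = n := mul_one _
    set t : ℝ := u - k / n with ht
    have ht_mem : t ∈ Ico (0:ℝ) (1/n) := by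
      constructor
      · have : (k:ℝ) ≤ n * u := Nat.floor_le (mul_nonneg hn'.le hu_mem.1)
        rw [ht, sub_nonneg, div_le_iff₀ hn']
        linarith
      · have : (n:ℝ) * u < k + 1 := Nat.lt_floor_add_one _
        rw [ht, sub_lt_iff_lt_add, ← add_div, lt_div_iff₀ hn']
        linarith [this]
    refine ⟨t, ht_mem, ?_⟩
    set κ : Fin n := ⟨k, hk_lt⟩ with hκ
    have hterm : ∀ i : Fin n, X i ω = q (t + (((κ + i : Fin n) : ℕ) : ℝ) / n) := by
      intro i
      have hval : ((κ + i : Fin n) : ℕ) = (k + (i:ℕ)) % n := by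
        simp [hκ, Fin.add_def]
      set m : ℕ := (k + (i:ℕ)) % n with hm
      have hm_lt : m < n := Nat.mod_lt _ hn
      set D : ℕ := (k + (i:ℕ)) / n with hD
      have hdm : k + (i:ℕ) = n * D + m := (Nat.div_add_mod _ _).symm
      -- circle equality
      have harg : (((u + ((i:ℕ):ℝ)/n) : ℝ) : AddCircle (1:ℝ))
          = (((t + (m:ℝ)/n) : ℝ) : AddCircle (1:ℝ)) := by
        have hdiff : (u + ((i:ℕ):ℝ)/n) - (t + (m:ℝ)/n) = (D:ℝ) := by
          rw [ht]
          have : ((k:ℝ) + (i:ℕ)) = (n:ℝ) * D + m := by exact_mod_cast hdm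
          field_simp
          linarith [this]
        have : (u + ((i:ℕ):ℝ)/n) = (t + (m:ℝ)/n) + (D:ℝ) := by linarith [hdiff]
        rw [this]
        have hD0 : (((D:ℝ) : ℝ) : AddCircle (1:ℝ)) = 0 := by
          rw [QuotientAddGroup.eq_zero_iff]
          exact ⟨(D:ℤ), by simp⟩
        have hsplit : (((t + (m:ℝ)/n + (D:ℝ)) : ℝ) : AddCircle (1:ℝ))
            = (((t + (m:ℝ)/n) : ℝ) : AddCircle (1:ℝ)) + (((D:ℝ) : ℝ) : AddCircle (1:ℝ)) :=
          rfl
        rw [hsplit, hD0, add_zero]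
      -- now compute X i ω
      have hωu : ω = ((u : ℝ) : AddCircle (1:ℝ)) := (hrep_mk ω).symm
      have hmem2 : t + (m:ℝ)/n ∈ Ico (0:ℝ) 1 := by
        constructor
        · have h1 : (0:ℝ) ≤ (m:ℝ)/n := by positivity
          have ht0 : (0:ℝ) ≤ t := ht_mem.1
          exact add_nonneg ht0 h1
        · have h2 : (m:ℝ) ≤ (n:ℝ) - 1 := by
            have : (m:ℝ) + 1 ≤ n := by exact_mod_cast hm_lt
            linarith
          have h3 : (m:ℝ)/n ≤ ((n:ℝ)-1)/n := by gcongr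
          have h4 : (1:ℝ)/n + ((n:ℝ)-1)/n = 1 := by field_simp; ring
          have ht1 : t < 1/(n:ℝ) := ht_mem.2
          linarith
      have e1 : ω + (((((i:ℕ):ℝ)/(n:ℝ)) : ℝ) : AddCircle (1:ℝ))
          = (((t + (m:ℝ)/n) : ℝ) : AddCircle (1:ℝ)) := by
        rw [hωu]
        calc ((u : ℝ) : AddCircle (1:ℝ)) + (((((i:ℕ):ℝ)/(n:ℝ)) : ℝ) : AddCircle (1:ℝ))
            = (((u + ((i:ℕ):ℝ)/(n:ℝ)) : ℝ) : AddCircle (1:ℝ)) := rfl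
          _ = (((t + (m:ℝ)/n) : ℝ) : AddCircle (1:ℝ)) := harg
      show q (rep (ω + (((((i:ℕ):ℝ)/(n:ℝ)) : ℝ) : AddCircle (1:ℝ))))
          = q (t + (((κ + i : Fin n) : ℕ) : ℝ) / n)
      rw [e1, hrep_of_mem _ hmem2, hval]
    -- reindex the sum
    calc (∑ i, X i ω) = ∑ i : Fin n, q (t + (((κ + i : Fin n) : ℕ) : ℝ) / n) :=
          Finset.sum_congr rfl (fun i _ => hterm i)
      _ = ∑ j : Fin n, q (t + ((j : ℕ) : ℝ) / n) :=
          Fintype.sum_equiv (Equiv.addLeft κ) _ _ (fun i => rfl)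
  -- the Ψ bound
  have hΨ : ∀ t s : ℝ, t ∈ Ico (0:ℝ) (1/n) → s ∈ Ico (0:ℝ) (1/n) →
      (∑ j : Fin n, q (s + ((j : ℕ) : ℝ) / n))
        ≤ (∑ j : Fin n, q (t + ((j : ℕ) : ℝ) / n)) + (b - a) := by
    intro t s hts hss
    rcases le_total s t with hst | hst
    · have h1 : (∑ j : Fin n, q (s + ((j : ℕ) : ℝ) / n))
          ≤ ∑ j : Fin n, q (t + ((j : ℕ) : ℝ) / n) :=
        Finset.sum_le_sum (fun j _ => hq_mono (by linarith))
      linarith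
    · obtain ⟨m, rfl⟩ : ∃ m, n = m + 1 := ⟨n - 1, (Nat.succ_pred_eq_of_pos hn).symm⟩
      rw [Fin.sum_univ_eq_sum_range (fun j => q (s + (j:ℝ) / (m+1:ℕ)))]
      rw [Fin.sum_univ_eq_sum_range (fun j => q (t + (j:ℝ) / (m+1:ℕ)))]
      rw [Finset.sum_range_succ (fun j => q (s + (j:ℝ) / (m+1:ℕ))) m]
      rw [Finset.sum_range_succ' (fun j => q (t + (j:ℝ) / (m+1:ℕ))) m]
      have hstep : ∀ j ∈ Finset.range m,
          q (s + (j:ℝ) / (m+1:ℕ)) ≤ q (t + ((j+1:ℕ):ℝ) / (m+1:ℕ)) := by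
        intro j hj
        apply hq_mono
        have h1 : s ≤ t + 1/(m+1:ℕ) := by
          have := hss.2
          have := hts.1
          push_cast at *
          linarith
        push_cast
        push_cast at h1
        rw [add_div]
        linarith
      have hsum := Finset.sum_le_sum hstep
      have hlast : q (s + (m:ℝ)/(m+1:ℕ)) ≤ b := (hq_mem _).2
      have hfirst : a ≤ q (t + ((0:ℕ):ℝ)/(m+1:ℕ)) := (hq_mem _).1
      push_cast at hsum hlast hfirst ⊢
      linarith
  -- conclude
  intro ω ω'
  obtain ⟨t, ht, hSt⟩ := hrepS ω
  obtain ⟨s, hs, hSs⟩ := hrepS ω'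
  rw [hSt, hSs]
  exact hΨ s t hs ht

end Coupling

section Helpers2

variable {ν : Measure ℝ} [IsProbabilityMeasure ν] {a b : ℝ}

/-- Jensen's lower bound, for arbitrary couplings. -/
lemma jensen_part (a b μ : ℝ) (hab : a < b)
    (hsupp : ν (Icc a b)ᶜ = 0) (hμ : μ = ∫ x, x ∂ν) (n : ℕ)
    (g : ℝ → ℝ) (hg : ConvexOn ℝ univ g)
    (Ω : Type) (mΩ : MeasurableSpace Ω) (P : Measure Ω) (X : Fin n → Ω → ℝ)
    (hP : IsProbabilityMeasure P) (hmap : ∀ i, Measure.map (X i) P = ν) :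
    g ((n : ℝ) * μ) ≤ ∫ ω, g (∑ i, X i ω) ∂P := by
  haveI := hP
  have hgc : Continuous g := continuousOn_univ.mp (hg.continuousOn isOpen_univ)
  have hXae : ∀ i, AEMeasurable (X i) P := by
    intro i
    by_contra h
    have h0 := Measure.map_of_not_aemeasurable h
    rw [hmap i] at h0
    exact (IsProbabilityMeasure.ne_zero ν) h0
  have hXmem : ∀ i, ∀ᵐ ω ∂P, X i ω ∈ Icc a b := by
    intro i
    have h0 : P (X i ⁻¹' (Icc a b)ᶜ) = 0 := by
      rw [← Measure.map_apply_of_aemeasurable (hXae i) measurableSet_Icc.compl, hmap i]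
      exact hsupp
    rw [ae_iff]
    convert h0 using 2
    rfl
  have hXint : ∀ i, Integrable (X i) P := by
    intro i
    refine Integrable.mono' (integrable_const (max |a| |b|)) (hXae i).aestronglyMeasurable ?_
    filter_upwards [hXmem i] with ω hω
    rw [Real.norm_eq_abs]
    exact abs_le_max_abs_abs hω.1 hω.2
  have hSint : Integrable (fun ω => ∑ i, X i ω) P :=
    integrable_finset_sum _ (fun i _ => hXint i)
  have hSmean : ∫ ω, (∑ i, X i ω) ∂P = (n : ℝ) * μ := by
    rw [integral_finset_sum _ (fun i _ => hXint i)]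
    have hXi : ∀ i : Fin n, ∫ ω, X i ω ∂P = μ := by
      intro i
      rw [hμ, ← hmap i]
      exact (integral_map (hXae i) aestronglyMeasurable_id).symm
    simp [hXi, Finset.sum_const, Finset.card_univ, nsmul_eq_mul]
  have hSmem : ∀ᵐ ω ∂P, (∑ i, X i ω) ∈ Icc ((n:ℝ) * a) ((n:ℝ) * b) := by
    have := ae_all_iff.mpr hXmem
    filter_upwards [this] with ω hω
    constructor
    · calc (n:ℝ) * a = ∑ _i : Fin n, a := by
            simp [Finset.sum_const, Finset.card_univ, nsmul_eq_mul]
        _ ≤ ∑ i, X i ω := Finset.sum_le_sum (fun i _ => (hω i).1)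
    · calc (∑ i, X i ω) ≤ ∑ _i : Fin n, b := Finset.sum_le_sum (fun i _ => (hω i).2)
        _ = (n:ℝ) * b := by simp [Finset.sum_const, Finset.card_univ, nsmul_eq_mul]
  have hSae : AEMeasurable (fun ω => ∑ i, X i ω) P :=
    Finset.aemeasurable_fun_sum _ (fun i _ => hXae i)
  obtain ⟨C, hC⟩ := (isCompact_Icc (a := (n:ℝ)*a) (b := (n:ℝ)*b)).exists_bound_of_continuousOn
    hgc.continuousOn
  have hgSint : Integrable (fun ω => g (∑ i, X i ω)) P := by
    refine Integrable.mono' (integrable_const C)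
      (hgc.measurable.comp_aemeasurable hSae).aestronglyMeasurable ?_
    filter_upwards [hSmem] with ω hω
    exact hC _ hω
  have := hg.map_integral_le hgc.continuousOn isClosed_univ
    (Eventually.of_forall (fun ω => mem_univ _)) hSint hgSint
  rwa [hSmean] at this

end Helpers2


set_option maxHeartbeats 1000000 in
/-- **Theorem 3.1.** Suppose `F` is a distribution on `[a,b]`, `a < b`, with mean `μ`.
Then for any convex function `g : ℝ → ℝ`,
`g(nμ) ≤ inf_{S ∈ 𝔖_n} E[g(S)] ≤ g(nμ + (b−a))/2 + g(nμ − (b−a))/2`: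
every `S = X₁ + ⋯ + X_n` with `X_i ∼ F` satisfies `g(nμ) ≤ E[g(S)]`, and some such `S`
satisfies `E[g(S)] ≤ g(nμ + (b−a))/2 + g(nμ − (b−a))/2`. -/
theorem convex_expectation_bounds
    (ν : Measure ℝ) [IsProbabilityMeasure ν] (a b μ : ℝ) (hab : a < b)
    (hsupp : ν (Icc a b)ᶜ = 0) (hμ : μ = ∫ x, x ∂ν) (n : ℕ) (hn : 0 < n)
    (g : ℝ → ℝ) (hg : ConvexOn ℝ univ g) :
    (∀ (Ω : Type) (mΩ : MeasurableSpace Ω) (P : Measure Ω) (X : Fin n → Ω → ℝ),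
      IsProbabilityMeasure P → (∀ i, Measure.map (X i) P = ν) →
      g ((n : ℝ) * μ) ≤ ∫ ω, g (∑ i, X i ω) ∂P) ∧
    (∃ (Ω : Type) (mΩ : MeasurableSpace Ω) (P : Measure Ω) (X : Fin n → Ω → ℝ),
      IsProbabilityMeasure P ∧ (∀ i, Measure.map (X i) P = ν) ∧
      ∫ ω, g (∑ i, X i ω) ∂P ≤
        (g ((n : ℝ) * μ + (b - a)) + g ((n : ℝ) * μ - (b - a))) / 2) := by
  constructor
  · intro Ω mΩ P X hP hmap
    exact jensen_part a b μ hab hsupp hμ n g hg Ω mΩ P X hP hmap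
  · -- the coupling construction
    haveI hPr : IsProbabilityMeasure (volume : Measure (AddCircle (1:ℝ))) :=
      ⟨by rw [AddCircle.measure_univ]; simp⟩
    obtain ⟨X, hXmeas, hXlaw, hXmem, hkey⟩ := coupling_exists hab hsupp n hn
    refine ⟨AddCircle (1:ℝ), inferInstance, volume, X, hPr, hXlaw, ?_⟩
    set P : Measure (AddCircle (1:ℝ)) := volume with hP
    set d : ℝ := b - a with hd
    have hd0 : 0 < d := by rw [hd]; linarith
    set p : ℝ := (n:ℝ) * μ with hp
    set S : AddCircle (1:ℝ) → ℝ := fun ω => ∑ i, X i ω with hS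
    have hSmeas : Measurable S := by
      apply Finset.measurable_sum
      exact fun i _ => hXmeas i
    have hgc : Continuous g := continuousOn_univ.mp (hg.continuousOn isOpen_univ)
    have hXint : ∀ i : Fin n, Integrable (X i) P := by
      intro i
      refine Integrable.mono' (integrable_const (max |a| |b|))
        (hXmeas i).aestronglyMeasurable ?_
      refine Eventually.of_forall (fun ω => ?_)
      rw [Real.norm_eq_abs]
      exact abs_le_max_abs_abs (hXmem i ω).1 (hXmem i ω).2
    have hSint : Integrable S P := integrable_finset_sum _ (fun i _ => hXint i)
    have hSmean : ∫ ω, S ω ∂P = p := by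
      rw [hS, hp]
      rw [integral_finset_sum _ (fun i _ => hXint i)]
      have hXi : ∀ i : Fin n, ∫ ω, X i ω ∂P = μ := by
        intro i
        rw [hμ, ← hXlaw i]
        exact (integral_map (hXmeas i).aemeasurable aestronglyMeasurable_id).symm
      simp [hXi, Finset.sum_const, Finset.card_univ, nsmul_eq_mul]
    have hub : ∀ ω, p ≤ S ω + d := by
      intro ω
      have h1 : ∀ ω', S ω' ≤ S ω + d := fun ω' => hkey ω' ω
      have h2 : ∫ ω', S ω' ∂P ≤ ∫ _ω', (S ω + d) ∂P :=
        integral_mono hSint (integrable_const _) h1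
      rw [hSmean] at h2
      rwa [integral_const, probReal_univ, one_smul] at h2
    have hlb : ∀ ω, S ω - d ≤ p := by
      intro ω
      have h1 : ∀ ω', S ω - d ≤ S ω' := by
        intro ω'
        have := hkey ω ω'
        linarith
      have h2 : ∫ _ω', (S ω - d) ∂P ≤ ∫ ω', S ω' ∂P :=
        integral_mono (integrable_const _) hSint h1
      rw [hSmean] at h2
      rwa [integral_const, probReal_univ, one_smul] at h2
    -- convexity estimate
    set θ : AddCircle (1:ℝ) → ℝ := fun ω => (S ω - (p - d)) / (2 * d) with hθ
    have hθ0 : ∀ ω, 0 ≤ θ ω := by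
      intro ω
      have := hub ω
      apply div_nonneg _ (by linarith)
      linarith
    have hθ1 : ∀ ω, θ ω ≤ 1 := by
      intro ω
      have := hlb ω
      rw [hθ, div_le_one (by linarith)]
      linarith
    have hgθ : ∀ ω, g (S ω) ≤ θ ω * g (p + d) + (1 - θ ω) * g (p - d) := by
      intro ω
      have h1 : θ ω + (1 - θ ω) = 1 := by ring
      have h2 := hg.2 (mem_univ (p + d)) (mem_univ (p - d)) (hθ0 ω)
        (by linarith [hθ1 ω]) h1
      have h3 : θ ω • (p + d) + (1 - θ ω) • (p - d) = S ω := by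
        rw [smul_eq_mul, smul_eq_mul, hθ]
        field_simp
        ring
      rw [h3] at h2
      simpa using h2
    have hθint : Integrable θ P := by
      rw [hθ]
      exact (hSint.sub (integrable_const _)).div_const _
    have hθmean : ∫ ω, θ ω ∂P = 1 / 2 := by
      rw [hθ]
      rw [integral_div]
      rw [integral_sub hSint (integrable_const _), hSmean, integral_const,
        probReal_univ, one_smul]
      field_simp
      ring
    obtain ⟨C, hC⟩ := (isCompact_Icc (a := p - d) (b := p + d)).exists_bound_of_continuousOn
      hgc.continuousOn
    have hgSint : Integrable (fun ω => g (S ω)) P := by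
      refine Integrable.mono' (integrable_const C)
        (hgc.measurable.comp hSmeas).aestronglyMeasurable ?_
      refine Eventually.of_forall (fun ω => ?_)
      exact hC _ ⟨by linarith [hub ω], by linarith [hlb ω]⟩
    have hsubint : Integrable (fun ω => 1 - θ ω) P := (integrable_const 1).sub hθint
    have h1int : Integrable (fun ω => θ ω * g (p + d)) P := hθint.mul_const _
    have h2int : Integrable (fun ω => (1 - θ ω) * g (p - d)) P := hsubint.mul_const _
    have hRint : Integrable (fun ω => θ ω * g (p + d) + (1 - θ ω) * g (p - d)) P :=
      h1int.add h2int
    have hfin : ∫ ω, g (S ω) ∂P ≤ ∫ ω, (θ ω * g (p + d) + (1 - θ ω) * g (p - d)) ∂P :=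
      integral_mono hgSint hRint hgθ
    have heval : ∫ ω, (θ ω * g (p + d) + (1 - θ ω) * g (p - d)) ∂P
        = (g (p + d) + g (p - d)) / 2 := by
      rw [integral_add h1int h2int, integral_mul_const, integral_mul_const,
        integral_sub (integrable_const 1) hθint, integral_const,
        probReal_univ, one_smul, hθmean]
      ring
    rw [heval] at hfin
    exact hfin
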